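/- Measure decay estimate for axisymmetric functions in ℝ⁵: there is a constant C such that for every axisymmetric φ ∈ H¹₀(B) (B ⊂ ℝ⁵ a ball) and every r₀ > 0, the one-dimensional Lebesgue measure |{z ∈ ℝ : φ(z, r₀) ≥ 1/2}| ≤ C r₀⁻³ ‖φ‖_{H¹₀(B)}^{8/3}, where φ(z,r) denotes φ at the point with axial coordinate z and radius r. -/

import Mathlib

open Real MeasureTheory

noncomputable section

/-- Euclidean `ℝ⁵`. -/
abbrev E5 := EuclideanSpace ℝ (Fin 5)

/-- Radius `r = |y'|` of `y = (y₁, y') ∈ ℝ × ℝ⁴ = ℝ⁵`. -/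
def rho5 (y : E5) : ℝ := Real.sqrt ((y 1) ^ 2 + (y 2) ^ 2 + (y 3) ^ 2 + (y 4) ^ 2)

/-- `|∇φ|²` on `ℝ⁵`. -/
def gradsq5 (φ : E5 → ℝ) (y : E5) : ℝ :=
  ∑ i : Fin 5, (fderiv ℝ φ y (EuclideanSpace.single i 1)) ^ 2

/-- The point of `ℝ⁵` with axial coordinate `a` and transverse part `w ∈ ℝ⁴`. -/
def pt5 (a : ℝ) (w : Fin 4 → ℝ) : E5 :=
  (WithLp.equiv 2 (Fin 5 → ℝ)).symm (Fin.cons a w)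

open scoped ENNReal NNReal

namespace S18

abbrev E4 := EuclideanSpace ℝ (Fin 4)

def nrm4 (w : Fin 4 → ℝ) : ℝ := Real.sqrt (w 0 ^ 2 + w 1 ^ 2 + w 2 ^ 2 + w 3 ^ 2)

@[simp] lemma pt5_0 (a : ℝ) (w : Fin 4 → ℝ) : pt5 a w 0 = a := rfl
@[simp] lemma pt5_1 (a : ℝ) (w : Fin 4 → ℝ) : pt5 a w 1 = w 0 := rfl
@[simp] lemma pt5_2 (a : ℝ) (w : Fin 4 → ℝ) : pt5 a w 2 = w 1 := rfl
@[simp] lemma pt5_3 (a : ℝ) (w : Fin 4 → ℝ) : pt5 a w 3 = w 2 := rfl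
@[simp] lemma pt5_4 (a : ℝ) (w : Fin 4 → ℝ) : pt5 a w 4 = w 3 := rfl

lemma rho5_pt5 (a : ℝ) (w : Fin 4 → ℝ) : rho5 (pt5 a w) = nrm4 w := rfl

lemma nrm4_nonneg (w : Fin 4 → ℝ) : 0 ≤ nrm4 w := Real.sqrt_nonneg _

lemma nrm4_single (t : ℝ) : nrm4 ![t, 0, 0, 0] = |t| := by
  simp [nrm4, Real.sqrt_sq_eq_abs]

lemma nrm4_smul (t : ℝ) (w : Fin 4 → ℝ) : nrm4 (t • w) = |t| * nrm4 w := by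
  unfold nrm4
  have h : (t • w) 0 ^ 2 + (t • w) 1 ^ 2 + (t • w) 2 ^ 2 + (t • w) 3 ^ 2
      = t ^ 2 * (w 0 ^ 2 + w 1 ^ 2 + w 2 ^ 2 + w 3 ^ 2) := by
    simp [Pi.smul_apply, smul_eq_mul]; ring
  rw [h, Real.sqrt_mul (sq_nonneg t), Real.sqrt_sq_eq_abs]

lemma norm_pt5 (a : ℝ) (w : Fin 4 → ℝ) :
    ‖pt5 a w‖ = Real.sqrt (a ^ 2 + (w 0 ^ 2 + w 1 ^ 2 + w 2 ^ 2 + w 3 ^ 2)) := by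
  rw [EuclideanSpace.norm_eq]; simp [Fin.sum_univ_five, add_assoc]

lemma norm_pt5_zero (w : Fin 4 → ℝ) : ‖pt5 0 w‖ = nrm4 w := by
  rw [norm_pt5]; norm_num [nrm4]

lemma abs_fst_le_norm_pt5 (a : ℝ) (w : Fin 4 → ℝ) : |a| ≤ ‖pt5 a w‖ := by
  rw [norm_pt5, ← Real.sqrt_sq_eq_abs]
  exact Real.sqrt_le_sqrt (le_add_of_nonneg_right (by positivity))

lemma nrm4_le_norm_pt5 (a : ℝ) (w : Fin 4 → ℝ) : nrm4 w ≤ ‖pt5 a w‖ := by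
  rw [norm_pt5, nrm4]
  exact Real.sqrt_le_sqrt (le_add_of_nonneg_left (by positivity))

lemma pt5_add (a b : ℝ) (w u : Fin 4 → ℝ) : pt5 a w + pt5 b u = pt5 (a + b) (w + u) := by
  ext i; induction i using Fin.cases <;> rfl

lemma pt5_smul (t a : ℝ) (w : Fin 4 → ℝ) : t • pt5 a w = pt5 (t * a) (t • w) := by
  ext i; induction i using Fin.cases <;> rfl

lemma pt5_line (z t : ℝ) (e : Fin 4 → ℝ) :
    pt5 z (t • e) = pt5 z 0 + t • pt5 0 e := by
  rw [pt5_smul, pt5_add]; norm_num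

lemma smul_e0 (t : ℝ) : t • ![(1:ℝ),0,0,0] = ![t,0,0,0] := by
  funext i; fin_cases i <;> simp

lemma pt5_decomp (z r : ℝ) :
    pt5 z ![r,0,0,0] = z • pt5 1 ![0,0,0,0] + r • pt5 0 ![1,0,0,0] := by
  rw [pt5_smul, pt5_smul, pt5_add, mul_one, mul_zero, add_zero]
  congr 1
  funext i; fin_cases i <;> simp

lemma cont_curve : Continuous (fun p : ℝ × ℝ => pt5 p.1 ![p.2, 0, 0, 0]) := by
  have h : (fun p : ℝ × ℝ => pt5 p.1 ![p.2,0,0,0])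
      = fun p : ℝ × ℝ => p.1 • pt5 1 ![0,0,0,0] + p.2 • pt5 0 ![1,0,0,0] :=
    funext fun p => pt5_decomp p.1 p.2
  rw [h]
  exact (continuous_fst.smul continuous_const).add (continuous_snd.smul continuous_const)

lemma cont_rpow_comp {α : Type*} [TopologicalSpace α] {f : α → ℝ} (hf : Continuous f)
    {q : ℝ} (hq : 0 < q) : Continuous fun x => f x ^ q := by
  rw [continuous_iff_continuousAt]
  exact fun x => (Real.continuousAt_rpow_const _ _ (Or.inr hq.le)).comp hf.continuousAt

/-! ### The measure-preserving splitting `ℝ⁵ ≃ ℝ × ℝ⁴` -/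

def T5 : (ℝ × E4) ≃ᵐ E5 :=
  (MeasurableEquiv.prodCongr (MeasurableEquiv.refl ℝ)
      (MeasurableEquiv.toLp 2 (Fin 4 → ℝ)).symm).trans
    (((MeasurableEquiv.piFinSuccAbove (fun _ : Fin 5 => ℝ) 0).symm).trans
      (MeasurableEquiv.toLp 2 (Fin 5 → ℝ)))

lemma T5_apply (z : ℝ) (w : E4) : T5 (z, w) = pt5 z (fun i => w i) := by
  show (MeasurableEquiv.toLp 2 (Fin 5 → ℝ))
      ((0 : Fin 5).insertNth z (fun i => w i)) = _
  rw [Fin.insertNth_zero']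
  rfl

lemma T5_mp : MeasurePreserving T5 volume volume := by
  have h1 : MeasurePreserving
      (Prod.map (id : ℝ → ℝ) (MeasurableEquiv.toLp 2 (Fin 4 → ℝ)).symm)
      (volume.prod volume) (volume.prod volume) :=
    (MeasurePreserving.id volume).prod
      (EuclideanSpace.volume_preserving_symm_measurableEquiv_toLp (Fin 4))
  have h2 := (volume_preserving_piFinSuccAbove (fun _ : Fin 5 => ℝ) 0).symm
  have h3 := (EuclideanSpace.volume_preserving_symm_measurableEquiv_toLp (Fin 5)).symm
  have h := (h3.comp h2).comp h1
  rw [Measure.volume_eq_prod]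
  exact h

lemma norm_E4 (w : E4) : ‖w‖ = nrm4 (fun i => w i) := by
  rw [EuclideanSpace.norm_eq, nrm4]
  simp [Fin.sum_univ_four, sq_abs]

/-! ### The slice function and its radial derivative -/

def ψ (φ : E5 → ℝ) (z r : ℝ) : ℝ := φ (pt5 z ![r, 0, 0, 0])

def ψr (φ : E5 → ℝ) (z r : ℝ) : ℝ :=
  (fderiv ℝ φ (pt5 z ![r, 0, 0, 0])) (pt5 0 ![1, 0, 0, 0])

def Apos (φ : E5 → ℝ) (z r : ℝ) : ℝ := ((ψ φ z r) ^ 2) ^ ((5:ℝ)/6) * |ψr φ z r|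

def Hbig (φ : E5 → ℝ) (y : E5) : ℝ := ((φ y) ^ 2) ^ ((5:ℝ)/6) * ‖fderiv ℝ φ y‖

lemma Apos_nonneg (φ : E5 → ℝ) (z r : ℝ) : 0 ≤ Apos φ z r :=
  mul_nonneg (Real.rpow_nonneg (sq_nonneg _) _) (abs_nonneg _)

lemma Hbig_nonneg (φ : E5 → ℝ) (y : E5) : 0 ≤ Hbig φ y :=
  mul_nonneg (Real.rpow_nonneg (sq_nonneg _) _) (norm_nonneg _)

section phi

variable {R : ℝ} {φ : E5 → ℝ}
variable (hax : ∀ y y' : E5, y 0 = y' 0 → rho5 y = rho5 y' → φ y = φ y')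
variable (hφ : ContDiff ℝ 1 φ)
variable (hsupp : ∀ y : E5, y ∉ Metric.ball (0 : E5) R → φ y = 0)

include hax in
lemma phi_pt5 (z : ℝ) (w : Fin 4 → ℝ) : φ (pt5 z w) = ψ φ z (nrm4 w) := by
  refine hax _ _ rfl ?_
  rw [rho5_pt5, rho5_pt5, nrm4_single, abs_of_nonneg (nrm4_nonneg w)]

include hφ in
lemma hasDerivAt_phi_line (z : ℝ) (e : Fin 4 → ℝ) (r : ℝ) :
    HasDerivAt (fun t => φ (pt5 z (t • e)))
      (fderiv ℝ φ (pt5 z (r • e)) (pt5 0 e)) r := by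
  have hc : HasDerivAt (fun t : ℝ => pt5 z (t • e)) (pt5 0 e) r := by
    have h := ((hasDerivAt_id r).smul_const (pt5 0 e)).const_add (pt5 z 0)
    rw [one_smul] at h
    simp_rw [← pt5_line] at h
    exact h
  exact ((hφ.differentiable one_ne_zero _).hasFDerivAt).comp_hasDerivAt r hc

include hφ in
lemma hasDerivAt_psi (z r : ℝ) : HasDerivAt (ψ φ z) (ψr φ z r) r := by
  have h := hasDerivAt_phi_line hφ z ![1,0,0,0] r
  simp_rw [smul_e0] at h
  exact h

include hφ hax in
lemma hasDerivAt_psi' (z : ℝ) {e : Fin 4 → ℝ} (he : nrm4 e = 1) (r : ℝ) :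
    HasDerivAt (ψ φ z) (fderiv ℝ φ (pt5 z (r • e)) (pt5 0 e)) r := by
  have h1 := hasDerivAt_phi_line hφ z e r
  have heq : (fun t => φ (pt5 z (t • e))) = ψ φ z := by
    funext t
    rw [phi_pt5 hax, nrm4_smul, he, mul_one]
    conv_rhs => rw [ψ, phi_pt5 hax, nrm4_single]
  rwa [heq] at h1

include hφ hax in
lemma psir_le (z : ℝ) {w : Fin 4 → ℝ} (hw : nrm4 w ≠ 0) :
    |ψr φ z (nrm4 w)| ≤ ‖fderiv ℝ φ (pt5 z w)‖ := by
  set r := nrm4 w with hrdef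
  have hr : 0 < r := (nrm4_nonneg w).lt_of_ne (Ne.symm hw)
  have he : nrm4 (r⁻¹ • w) = 1 := by
    rw [nrm4_smul, abs_of_nonneg (inv_nonneg.2 hr.le), inv_mul_cancel₀ hw]
  have hre : r • (r⁻¹ • w) = w := by rw [smul_smul, mul_inv_cancel₀ hw, one_smul]
  have h1 := hasDerivAt_psi' hax hφ z he r
  rw [hre] at h1
  have h2 := hasDerivAt_psi hφ z r
  have hDe : ψr φ z r = fderiv ℝ φ (pt5 z w) (pt5 0 (r⁻¹ • w)) := h2.unique h1
  rw [hDe, ← Real.norm_eq_abs]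
  calc ‖fderiv ℝ φ (pt5 z w) (pt5 0 (r⁻¹ • w))‖
      ≤ ‖fderiv ℝ φ (pt5 z w)‖ * ‖pt5 0 (r⁻¹ • w)‖ := (fderiv ℝ φ _).le_opNorm _
    _ = ‖fderiv ℝ φ (pt5 z w)‖ := by rw [norm_pt5_zero, he, mul_one]

include hsupp in
lemma psi_zero (z : ℝ) {r : ℝ} (hr : R ≤ |r|) : ψ φ z r = 0 := by
  refine hsupp _ ?_
  rw [Metric.mem_ball, dist_zero_right, not_lt]
  calc R ≤ |r| := hr
    _ = nrm4 ![r,0,0,0] := (nrm4_single r).symm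
    _ ≤ ‖pt5 z ![r,0,0,0]‖ := nrm4_le_norm_pt5 _ _

include hsupp in
lemma psi_zero' {z : ℝ} (hz : R ≤ |z|) (r : ℝ) : ψ φ z r = 0 := by
  refine hsupp _ ?_
  rw [Metric.mem_ball, dist_zero_right, not_lt]
  exact le_trans hz (abs_fst_le_norm_pt5 _ _)

include hsupp in
lemma fderiv_zero {y : E5} (hy : R < ‖y‖) : fderiv ℝ φ y = 0 := by
  have ho : IsOpen {x : E5 | R < ‖x‖} := isOpen_lt continuous_const continuous_norm
  have hev : φ =ᶠ[nhds y] (fun _ => 0) := by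
    refine Filter.eventually_of_mem (ho.mem_nhds hy) (fun x hx => hsupp x ?_)
    rw [Metric.mem_ball, dist_zero_right, not_lt]
    exact le_of_lt hx
  rw [hev.fderiv_eq]
  exact fderiv_const_apply 0

include hsupp in
lemma psir_zero (z : ℝ) {r : ℝ} (hr : R < |r|) : ψr φ z r = 0 := by
  have hlt : R < ‖pt5 z ![r,0,0,0]‖ :=
    lt_of_lt_of_le (lt_of_lt_of_le hr (le_of_eq (nrm4_single r).symm)) (nrm4_le_norm_pt5 _ _)
  rw [ψr, fderiv_zero hsupp hlt]
  rfl

include hφ in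
lemma cont_psi : Continuous (fun p : ℝ × ℝ => ψ φ p.1 p.2) :=
  hφ.continuous.comp cont_curve

include hφ in
lemma cont_psir : Continuous (fun p : ℝ × ℝ => ψr φ p.1 p.2) :=
  ((hφ.continuous_fderiv one_ne_zero).comp cont_curve).clm_apply continuous_const

end phi

/-! ### One-dimensional FTC bound on a slice -/

lemma slice_bound {ψf ψrf : ℝ → ℝ} {R r₀ : ℝ}
    (hd : ∀ r, HasDerivAt ψf (ψrf r) r) (hψc : Continuous ψf) (hψrc : Continuous ψrf)
    (hz : ∀ r, R < |r| → ψrf r = 0) (hz2 : ∀ r, R ≤ |r| → ψf r = 0)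
    (hr₀ : 0 < r₀) :
    ((ψf r₀) ^ 2) ^ ((4:ℝ)/3)
      ≤ (8/3) * r₀⁻¹ ^ 3 * ∫ r in Set.Ioi r₀, ((ψf r)^2) ^ ((5:ℝ)/6) * |ψrf r| * r ^ 3 := by
  set T : ℝ := max R r₀ + 1 with hT
  have hr₀T : r₀ ≤ T := le_trans (le_max_right _ _) (by linarith)
  set h : ℝ → ℝ := fun r => ((ψf r) ^ 2) ^ ((4:ℝ)/3) with hh
  set A : ℝ → ℝ := fun r => ((ψf r)^2) ^ ((5:ℝ)/6) * |ψrf r| with hA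
  have hd' : ∀ r, HasDerivAt h ((4/3) * ((ψf r)^2) ^ ((1:ℝ)/3) * (2 * ψf r * ψrf r)) r := by
    intro r
    have hsq : HasDerivAt (fun t => (ψf t) ^ 2) (2 * ψf r * ψrf r) r := by
      simpa [mul_comm, mul_assoc, mul_left_comm] using (hd r).fun_pow 2
    have hrp := (Real.hasDerivAt_rpow_const (x := (ψf r)^2) (p := (4:ℝ)/3)
      (Or.inr (by norm_num)))
    have := hrp.comp r hsq
    rw [show (4:ℝ)/3 - 1 = 1/3 by norm_num] at this
    exact this
  have hA_cont : Continuous A := (cont_rpow_comp (hψc.pow 2) (by norm_num)).mul hψrc.abs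
  have h'_cont : Continuous fun r => (4/3) * ((ψf r)^2) ^ ((1:ℝ)/3) * (2 * ψf r * ψrf r) :=
    (continuous_const.mul (cont_rpow_comp (hψc.pow 2) (by norm_num))).mul
      ((continuous_const.mul hψc).mul hψrc)
  have hftc := intervalIntegral.integral_eq_sub_of_hasDerivAt (f := h) (fun x _ => hd' x)
    (h'_cont.intervalIntegrable r₀ T)
  have hhT : h T = 0 := by
    have hψT : ψf T = 0 := by
      refine hz2 T ?_
      rw [abs_of_pos (by linarith [lt_of_lt_of_le hr₀ hr₀T])]
      simp [hT]
      linarith [le_max_left R r₀]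
    simp [hh, hψT]
  have key : ∀ r ∈ Set.Icc r₀ T,
      |(4/3) * ((ψf r)^2) ^ ((1:ℝ)/3) * (2 * ψf r * ψrf r)| ≤ (8/3) * r₀⁻¹ ^ 3 * (A r * r ^ 3) := by
    intro r hr
    have hrpos : 0 < r := lt_of_lt_of_le hr₀ hr.1
    have e1 : ((ψf r)^2) ^ ((1:ℝ)/3) * |ψf r| = ((ψf r)^2) ^ ((5:ℝ)/6) := by
      rw [← Real.sqrt_sq_eq_abs, Real.sqrt_eq_rpow,
        ← Real.rpow_add' (sq_nonneg _) (by norm_num)]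
      norm_num
    have habs : |(4/3) * ((ψf r)^2) ^ ((1:ℝ)/3) * (2 * ψf r * ψrf r)| = (8/3) * A r := by
      simp only [hA, abs_mul, abs_of_nonneg (Real.rpow_nonneg (sq_nonneg (ψf r)) ((1:ℝ)/3))]
      rw [← e1]
      rw [abs_of_nonneg (by norm_num : (0:ℝ) ≤ 4/3), abs_two]
      ring
    rw [habs]
    have h1 : 1 ≤ r₀⁻¹ ^ 3 * r ^ 3 := by
      rw [← mul_pow]
      have h2 : (1:ℝ) ≤ r₀⁻¹ * r := by
        rw [inv_mul_eq_div, le_div_iff₀ hr₀]; simpa using hr.1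
      calc (1:ℝ) = 1 ^ 3 := by norm_num
        _ ≤ (r₀⁻¹ * r) ^ 3 := pow_le_pow_left₀ (by norm_num) h2 3
    have hA0 : 0 ≤ A r := mul_nonneg (Real.rpow_nonneg (sq_nonneg _) _) (abs_nonneg _)
    calc (8/3) * A r = (8/3) * A r * 1 := by ring
      _ ≤ (8/3) * A r * (r₀⁻¹ ^ 3 * r ^ 3) := by
          apply mul_le_mul_of_nonneg_left h1 (by positivity)
      _ = (8/3) * r₀⁻¹ ^ 3 * (A r * r ^ 3) := by ring
  have hsupport : ∀ r, r ∉ Metric.closedBall (0:ℝ) R → A r * r ^ 3 = 0 := by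
    intro r hr
    rw [Metric.mem_closedBall, dist_zero_right, Real.norm_eq_abs, not_le] at hr
    rw [hA]
    simp [hz r hr]
  have hint : Integrable (fun r => A r * r ^ 3) := by
    refine Continuous.integrable_of_hasCompactSupport (hA_cont.mul (continuous_pow 3)) ?_
    exact HasCompactSupport.intro (isCompact_closedBall 0 R) hsupport
  have hAr3_nonneg : ∀ r ∈ Set.Ioi r₀, 0 ≤ A r * r ^ 3 := fun r hr =>
    mul_nonneg (mul_nonneg (Real.rpow_nonneg (sq_nonneg _) _) (abs_nonneg _))
      (pow_nonneg (le_of_lt (lt_trans hr₀ hr)) 3)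
  calc h r₀ = -(h T - h r₀) + h T := by ring
    _ = -(∫ r in r₀..T, (4/3) * ((ψf r)^2) ^ ((1:ℝ)/3) * (2 * ψf r * ψrf r)) := by
        rw [hftc, hhT]; ring
    _ ≤ |∫ r in r₀..T, (4/3) * ((ψf r)^2) ^ ((1:ℝ)/3) * (2 * ψf r * ψrf r)| := neg_le_abs _
    _ ≤ ∫ r in r₀..T, |(4/3) * ((ψf r)^2) ^ ((1:ℝ)/3) * (2 * ψf r * ψrf r)| :=
        intervalIntegral.abs_integral_le_integral_abs hr₀T
    _ ≤ ∫ r in r₀..T, (8/3) * r₀⁻¹ ^ 3 * (A r * r ^ 3) := by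
        refine intervalIntegral.integral_mono_on hr₀T
          (h'_cont.abs.intervalIntegrable r₀ T)
          ((continuous_const.mul (hA_cont.mul (continuous_pow 3))).intervalIntegrable r₀ T) key
    _ = (8/3) * r₀⁻¹ ^ 3 * ∫ r in Set.Ioc r₀ T, (A r * r ^ 3) := by
        rw [intervalIntegral.integral_of_le hr₀T, MeasureTheory.integral_const_mul]
    _ ≤ (8/3) * r₀⁻¹ ^ 3 * ∫ r in Set.Ioi r₀, (A r * r ^ 3) := by
        apply mul_le_mul_of_nonneg_left _ (by positivity)
        refine setIntegral_mono_set hint.integrableOn ?_ ?_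
        · exact (ae_restrict_iff' measurableSet_Ioi).2
            (Filter.Eventually.of_forall fun r hr => hAr3_nonneg r hr)
        · exact (Set.Ioc_subset_Ioi_self).eventuallyLE

/-! ### Markov inequality -/

lemma markov {g : ℝ → ℝ} (hg : Integrable g) (hg0 : ∀ z, 0 ≤ g z) {c : ℝ} (hc : 0 < c) :
    volume {z | c ≤ g z} ≤ ENNReal.ofReal (c⁻¹ * ∫ z, g z) := by
  have haem : AEMeasurable (fun z => ENNReal.ofReal (g z)) volume :=
    (ENNReal.measurable_ofReal.comp_aemeasurable hg.aemeasurable)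
  have h1 : ENNReal.ofReal c * volume {z | c ≤ g z} ≤ ∫⁻ z, ENNReal.ofReal (g z) := by
    refine le_trans ?_ (mul_meas_ge_le_lintegral₀ haem (ENNReal.ofReal c))
    gcongr
    exact fun hz => ENNReal.ofReal_le_ofReal hz
  rw [← ofReal_integral_eq_lintegral_ofReal hg (Filter.Eventually.of_forall hg0)] at h1
  have h2 := mul_le_mul_right h1 (ENNReal.ofReal c⁻¹)
  rw [← mul_assoc, ← ENNReal.ofReal_mul (by positivity), inv_mul_cancel₀ hc.ne',
    ENNReal.ofReal_one, one_mul, ← ENNReal.ofReal_mul (by positivity)] at h2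
  exact h2

/-! ### Polar-coordinates identity on `ℝ⁴` -/

lemma polar4 {r₀ : ℝ} (hr₀ : 0 < r₀) (A : ℝ → ℝ) :
    ∫ w : E4, Set.indicator (Set.Ioi r₀) A ‖w‖
      = (4 * (volume (Metric.ball (0:E4) 1)).toReal) * ∫ r in Set.Ioi r₀, A r * r ^ 3 := by
  rw [integral_fun_norm_addHaar (volume : Measure E4) (Set.indicator (Set.Ioi r₀) A)]
  rw [finrank_euclideanSpace_fin]
  have h1 : ∀ y : ℝ, y ^ (4 - 1) • Set.indicator (Set.Ioi r₀) A y
      = Set.indicator (Set.Ioi r₀) (fun r => A r * r ^ 3) y := by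
    intro y
    by_cases hy : y ∈ Set.Ioi r₀ <;>
      simp [Set.indicator_of_mem, Set.indicator_of_notMem, hy, mul_comm]
  rw [nsmul_eq_mul, smul_eq_mul]
  simp_rw [h1]
  rw [integral_indicator measurableSet_Ioi, Measure.restrict_restrict measurableSet_Ioi,
    Set.inter_eq_self_of_subset_left (Set.Ioi_subset_Ioi hr₀.le)]
  push_cast
  rw [measureReal_def]
  ring

/-! ### `eLpNorm` in terms of a Bochner integral -/

lemma eLp_ofReal {F : Type*} [NormedAddCommGroup F] {f : E5 → F} (hc : Continuous f)
    (hcs : HasCompactSupport f) {q : ℝ≥0} (hq : 0 < (q:ℝ)) :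
    eLpNorm f q volume = ENNReal.ofReal ((∫ y, ‖f y‖ ^ (q:ℝ)) ^ (1/(q:ℝ))) := by
  have hint : Integrable (fun y => ‖f y‖ ^ (q:ℝ)) := by
    refine Continuous.integrable_of_hasCompactSupport (cont_rpow_comp hc.norm hq) ?_
    refine HasCompactSupport.intro hcs.isCompact (fun y hy => ?_)
    have hf0 : f y = 0 := by
      by_contra h
      exact hy (subset_tsupport f (by simp [Function.mem_support, h]))
    simp [hf0, Real.zero_rpow hq.ne']
  rw [eLpNorm_eq_lintegral_rpow_enorm_toReal (by exact_mod_cast hq.ne' : (q : ℝ≥0∞) ≠ 0)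
    (by simp : (q : ℝ≥0∞) ≠ ⊤)]
  have hpt : ∀ y, ‖f y‖ₑ ^ ((q : ℝ≥0∞)).toReal = ENNReal.ofReal (‖f y‖ ^ (q:ℝ)) := by
    intro y
    rw [ENNReal.coe_toReal, ← ofReal_norm,
      ← ENNReal.ofReal_rpow_of_nonneg (norm_nonneg _) hq.le]
  rw [lintegral_congr hpt, ← ofReal_integral_eq_lintegral_ofReal hint
    (Filter.Eventually.of_forall fun y => Real.rpow_nonneg (norm_nonneg _) _),
    ← ENNReal.ofReal_rpow_of_nonneg (integral_nonneg fun y => Real.rpow_nonneg (norm_nonneg _) _)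
      (by positivity), ENNReal.coe_toReal]

/-! ### `‖fderiv‖² = gradsq5` -/

lemma gradsq_eq (φ : E5 → ℝ) (y : E5) : ‖fderiv ℝ φ y‖ ^ (2:ℝ) = gradsq5 φ y := by
  set B := fderiv ℝ φ y with hB
  set u : E5 := (InnerProductSpace.toDual ℝ E5).symm B with hu
  have hBv : ∀ v, B v = inner ℝ u v := fun v =>
    (InnerProductSpace.toDual_symm_apply).symm
  have hnorm : ‖B‖ = ‖u‖ := ((InnerProductSpace.toDual ℝ E5).symm.norm_map B).symm
  have hsingle : ∀ i : Fin 5, B (EuclideanSpace.single i 1) = u i := fun i => by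
    rw [hBv, EuclideanSpace.inner_single_right]
    simp
  rw [gradsq5]
  simp_rw [← hB, hsingle]
  rw [hnorm, EuclideanSpace.norm_eq, show (2:ℝ) = ((2:ℕ):ℝ) by norm_num,
    Real.rpow_natCast, Real.sq_sqrt (by positivity)]
  congr 1
  funext i
  rw [Real.norm_eq_abs, sq_abs]

end S18

open S18

/-- Measure decay for axisymmetric functions in `H¹₀` of a ball `B ⊂ ℝ⁵`: there is a
constant `C` such that `|{z : φ(z, r₀) ≥ 1/2}| ≤ C r₀⁻³ ‖φ‖_{H¹₀(B)}^{8/3}` for every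
axisymmetric `φ ∈ H¹₀(B)` and every `r₀ > 0`. -/
theorem stmt18 :
    ∃ C > (0 : ℝ), ∀ R : ℝ, 0 < R → ∀ φ : E5 → ℝ, ContDiff ℝ 1 φ →
      (∀ y : E5, y ∉ Metric.ball (0 : E5) R → φ y = 0) →
      (∀ y y' : E5, y 0 = y' 0 → rho5 y = rho5 y' → φ y = φ y') →
      ∀ r₀ : ℝ, 0 < r₀ →
        volume {z : ℝ | 1 / 2 ≤ φ (pt5 z ![r₀, 0, 0, 0])}
          ≤ ENNReal.ofReal (C / r₀ ^ 3 *
              (∫ y in Metric.ball (0 : E5) R, gradsq5 φ y) ^ ((4 : ℝ) / 3)) := by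
  classical
  set κ : ℝ := 4 * (volume (Metric.ball (0:E4) 1)).toReal with hκdef
  have hκ : 0 < κ := by
    have h1 : 0 < volume (Metric.ball (0:E4) 1) := Metric.measure_ball_pos _ _ one_pos
    have h2 : volume (Metric.ball (0:E4) 1) < ⊤ := measure_ball_lt_top
    have := ENNReal.toReal_pos h1.ne' h2.ne
    positivity
  set Cs : ℝ := ((eLpNormLESNormFDerivOfEqInnerConst (volume : Measure E5) 2 : ℝ≥0) : ℝ) + 1
    with hCsdef
  have hCs : 0 < Cs := by positivity
  set c : ℝ := ((1/2:ℝ)^2) ^ ((4:ℝ)/3) with hcdef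
  have hcpos : 0 < c := Real.rpow_pos_of_pos (by norm_num) _
  refine ⟨c⁻¹ * (8/3) * κ⁻¹ * Cs ^ ((5:ℝ)/3), by positivity, ?_⟩
  intro R hR φ hφ hsupp hax r₀ hr₀
  have hφc := hφ.continuous
  have hcs : HasCompactSupport φ :=
    HasCompactSupport.intro (isCompact_closedBall (0:E5) R)
      (fun y hy => hsupp y (fun hmem => hy (Metric.ball_subset_closedBall hmem)))
  have hfdc : Continuous (fderiv ℝ φ) := hφ.continuous_fderiv one_ne_zero
  have hfd0 : ∀ y : E5, R < ‖y‖ → fderiv ℝ φ y = 0 := fun y hy => fderiv_zero hsupp hy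
  have hHb_cont : Continuous (Hbig φ) :=
    (cont_rpow_comp (hφc.pow 2) (by norm_num)).mul hfdc.norm
  have hHb_supp : HasCompactSupport (Hbig φ) := by
    refine HasCompactSupport.intro (isCompact_closedBall (0:E5) R) (fun y hy => ?_)
    rw [Metric.mem_closedBall, dist_zero_right, not_le] at hy
    unfold Hbig
    rw [hfd0 y hy, norm_zero, mul_zero]
  have hHb_int : Integrable (Hbig φ) := hHb_cont.integrable_of_hasCompactSupport hHb_supp
  set J : ℝ := ∫ y, Hbig φ y with hJdef
  set Q : ℝ := ∫ y : E5, ‖fderiv ℝ φ y‖ ^ (2:ℝ) with hQdef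
  set P : ℝ := ∫ y : E5, ‖φ y‖ ^ ((10:ℝ)/3) with hPdef
  have hQ0 : 0 ≤ Q := integral_nonneg fun y => Real.rpow_nonneg (norm_nonneg _) _
  have hP0 : 0 ≤ P := integral_nonneg fun y => Real.rpow_nonneg (norm_nonneg _) _
  -- the slice function
  set g : ℝ → ℝ := fun z => ((ψ φ z r₀) ^ 2) ^ ((4:ℝ)/3) with hgdef
  have hg0 : ∀ z, 0 ≤ g z := fun z => Real.rpow_nonneg (sq_nonneg _) _
  have hgc : Continuous g := by
    refine cont_rpow_comp ?_ (by norm_num)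
    exact ((cont_psi hφ).comp (continuous_id.prodMk continuous_const)).pow 2
  have hg_supp : HasCompactSupport g := by
    refine HasCompactSupport.intro (isCompact_closedBall (0:ℝ) R) (fun z hz => ?_)
    rw [Metric.mem_closedBall, dist_zero_right, Real.norm_eq_abs, not_le] at hz
    rw [hgdef]
    simp [psi_zero' hsupp hz.le r₀, Real.zero_rpow (by norm_num : ((4:ℝ)/3) ≠ 0)]
  have hg_int : Integrable g := hgc.integrable_of_hasCompactSupport hg_supp
  -- Markov step
  have hSsub : {z : ℝ | 1/2 ≤ φ (pt5 z ![r₀,0,0,0])} ⊆ {z : ℝ | c ≤ g z} := by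
    intro z hz
    have h1 : (1/2:ℝ) ≤ ψ φ z r₀ := hz
    have h2 : ((1/2:ℝ))^2 ≤ (ψ φ z r₀)^2 := pow_le_pow_left₀ (by norm_num) h1 2
    exact Real.rpow_le_rpow (by norm_num) h2 (by norm_num)
  have hmarkov : volume {z : ℝ | 1/2 ≤ φ (pt5 z ![r₀,0,0,0])}
      ≤ ENNReal.ofReal (c⁻¹ * ∫ z, g z) :=
    le_trans (measure_mono hSsub) (markov hg_int hg0 hcpos)
  -- slice bound
  have hslice : ∀ z : ℝ, g z ≤ (8/3) * r₀⁻¹ ^ 3 * ∫ r in Set.Ioi r₀, Apos φ z r * r ^ 3 := by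
    intro z
    refine slice_bound (hasDerivAt_psi hφ z)
      ((cont_psi hφ).comp (continuous_const.prodMk continuous_id))
      ((cont_psir hφ).comp (continuous_const.prodMk continuous_id))
      (fun r hr => psir_zero hsupp z hr) (fun r hr => psi_zero hsupp z hr) hr₀
  -- polar identity
  have hpolar : ∀ z : ℝ, ∫ w : E4, Set.indicator (Set.Ioi r₀) (Apos φ z) ‖w‖
      = κ * ∫ r in Set.Ioi r₀, Apos φ z r * r ^ 3 := fun z => polar4 hr₀ (Apos φ z)
  -- pointwise comparison on ℝ⁴ fibers
  have hptw : ∀ (z : ℝ) (w : E4), w ≠ 0 →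
      Set.indicator (Set.Ioi r₀) (Apos φ z) ‖w‖ ≤ Hbig φ (T5 (z, w)) := by
    intro z w hw
    rw [T5_apply]
    by_cases hmem : ‖w‖ ∈ Set.Ioi r₀
    · rw [Set.indicator_of_mem hmem]
      have hnw : ‖w‖ = nrm4 (fun i => w i) := norm_E4 w
      have hne : nrm4 (fun i => w i) ≠ 0 := by
        rw [← hnw]
        exact (lt_trans hr₀ hmem).ne'
      have h1 : ψ φ z (nrm4 (fun i => w i)) = φ (pt5 z (fun i => w i)) :=
        (phi_pt5 hax z _).symm
      unfold Apos Hbig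
      rw [hnw, h1]
      exact mul_le_mul_of_nonneg_left (psir_le hax hφ z hne)
        (Real.rpow_nonneg (sq_nonneg _) _)
    · rw [Set.indicator_of_notMem hmem]
      exact Hbig_nonneg φ _
  -- Fubini set-up
  have hcomp : Integrable (fun p : ℝ × E4 => Hbig φ (T5 p)) volume :=
    (T5_mp.integrable_comp_emb T5.measurableEmbedding).2 hHb_int
  have hprod : Integrable (fun p : ℝ × E4 => Hbig φ (T5 p)) (volume.prod volume) := by
    rwa [← Measure.volume_eq_prod]
  have hae_slice : ∀ᵐ z : ℝ, Integrable (fun w : E4 => Hbig φ (T5 (z, w))) volume :=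
    hprod.prod_right_ae
  have hGG_int : Integrable (fun z : ℝ => ∫ w : E4, Hbig φ (T5 (z, w))) volume :=
    hprod.integral_prod_left
  have hfub : ∫ z : ℝ, (∫ w : E4, Hbig φ (T5 (z, w))) = J := by
    have h1 : ∫ p : ℝ × E4, Hbig φ (T5 p) = J :=
      T5_mp.integral_comp T5.measurableEmbedding (Hbig φ)
    rw [← h1, Measure.volume_eq_prod, integral_prod _ hprod]
  -- a.e. bound for g
  have hw0 : ∀ᵐ w : E4, w ≠ 0 := by
    have h0 : volume ({0} : Set E4) = 0 := measure_singleton 0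
    rw [ae_iff]
    convert h0 using 2
    ext w
    simp
  have hae2 : ∀ᵐ z : ℝ, g z ≤ (8/3) * r₀⁻¹ ^ 3 * κ⁻¹ * ∫ w : E4, Hbig φ (T5 (z, w)) := by
    filter_upwards [hae_slice] with z hz
    have h2 : κ * ∫ r in Set.Ioi r₀, Apos φ z r * r ^ 3 ≤ ∫ w : E4, Hbig φ (T5 (z, w)) := by
      rw [← hpolar z]
      refine integral_mono_of_nonneg ?_ hz ?_
      · exact Filter.Eventually.of_forall fun w =>
          Set.indicator_nonneg (fun r _ => Apos_nonneg φ z r) _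
      · filter_upwards [hw0] with w hw using hptw z w hw
    calc g z ≤ (8/3) * r₀⁻¹ ^ 3 * ∫ r in Set.Ioi r₀, Apos φ z r * r ^ 3 := hslice z
      _ = (8/3) * r₀⁻¹ ^ 3 * κ⁻¹ * (κ * ∫ r in Set.Ioi r₀, Apos φ z r * r ^ 3) := by
          have hκ' : κ ≠ 0 := hκ.ne'
          field_simp
      _ ≤ (8/3) * r₀⁻¹ ^ 3 * κ⁻¹ * ∫ w : E4, Hbig φ (T5 (z, w)) := by
          refine mul_le_mul_of_nonneg_left h2 (by positivity)
  have hgJ : ∫ z, g z ≤ (8/3) * r₀⁻¹ ^ 3 * κ⁻¹ * J := by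
    calc ∫ z, g z
        ≤ ∫ z, (8/3) * r₀⁻¹ ^ 3 * κ⁻¹ * ∫ w : E4, Hbig φ (T5 (z, w)) :=
          integral_mono_of_nonneg (Filter.Eventually.of_forall hg0)
            (hGG_int.const_mul _) hae2
      _ = (8/3) * r₀⁻¹ ^ 3 * κ⁻¹ * J := by
          rw [MeasureTheory.integral_const_mul, hfub]
  -- Hölder
  have hMem1 : MemLp (fun y => ((φ y)^2) ^ ((5:ℝ)/6)) 2 volume := by
    refine Continuous.memLp_of_hasCompactSupport
      (cont_rpow_comp (hφc.pow 2) (by norm_num)) ?_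
    refine HasCompactSupport.intro hcs.isCompact (fun y hy => ?_)
    have hf0 : φ y = 0 := by
      by_contra h
      exact hy (subset_tsupport φ (by simp [Function.mem_support, h]))
    simp [hf0, Real.zero_rpow (by norm_num : ((5:ℝ)/6) ≠ 0)]
  have hMem2 : MemLp (fun y => ‖fderiv ℝ φ y‖) 2 volume := by
    refine Continuous.memLp_of_hasCompactSupport hfdc.norm ?_
    refine HasCompactSupport.intro (isCompact_closedBall (0:E5) R) (fun y hy => ?_)
    rw [Metric.mem_closedBall, dist_zero_right, not_le] at hy
    rw [hfd0 y hy, norm_zero]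
  have hconj : Real.HolderConjugate 2 2 := Real.holderConjugate_iff.mpr ⟨by norm_num, by norm_num⟩
  have h2of : ENNReal.ofReal (2:ℝ) = 2 := by norm_num
  have hholder0 := integral_mul_le_Lp_mul_Lq_of_nonneg (μ := volume) hconj
    (Filter.Eventually.of_forall fun y => Real.rpow_nonneg (sq_nonneg (φ y)) _)
    (Filter.Eventually.of_forall fun y => norm_nonneg (fderiv ℝ φ y))
    (by rw [h2of]; exact hMem1) (by rw [h2of]; exact hMem2)
  have hPP : (∫ y : E5, (((φ y)^2) ^ ((5:ℝ)/6)) ^ (2:ℝ)) = P := by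
    rw [hPdef]
    refine integral_congr_ae (Filter.Eventually.of_forall fun y => ?_)
    show (((φ y)^2) ^ ((5:ℝ)/6)) ^ (2:ℝ) = ‖φ y‖ ^ ((10:ℝ)/3)
    rw [← Real.rpow_mul (sq_nonneg (φ y)), ← sq_abs (φ y), ← Real.rpow_natCast |φ y| 2,
      ← Real.rpow_mul (abs_nonneg (φ y)), Real.norm_eq_abs]
    norm_num
  have hQQ : (∫ y : E5, ‖fderiv ℝ φ y‖ ^ (2:ℝ)) = Q := rfl
  have hholder : J ≤ P ^ ((1:ℝ)/2) * Q ^ ((1:ℝ)/2) := by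
    rw [hJdef]
    calc (∫ y, Hbig φ y)
        = ∫ y, ((φ y)^2) ^ ((5:ℝ)/6) * ‖fderiv ℝ φ y‖ := rfl
      _ ≤ (∫ y : E5, (((φ y)^2) ^ ((5:ℝ)/6)) ^ (2:ℝ)) ^ (1/(2:ℝ)) *
          (∫ y : E5, ‖fderiv ℝ φ y‖ ^ (2:ℝ)) ^ (1/(2:ℝ)) := hholder0
      _ = P ^ ((1:ℝ)/2) * Q ^ ((1:ℝ)/2) := by rw [hPP, hQQ]
  -- Sobolev
  have hsob0 : eLpNorm φ ((10/3 : ℝ≥0) : ℝ≥0∞) volume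
      ≤ (eLpNormLESNormFDerivOfEqInnerConst (volume : Measure E5) 2) *
        eLpNorm (fderiv ℝ φ) ((2 : ℝ≥0) : ℝ≥0∞) volume := by
    refine eLpNorm_le_eLpNorm_fderiv_of_eq_inner (p := 2) (p' := 10/3) volume hφ hcs
      (by norm_num) ?_ ?_
    · rw [finrank_euclideanSpace_fin]; norm_num
    · rw [finrank_euclideanSpace_fin]
      push_cast
      norm_num
  have he1 : eLpNorm φ ((10/3 : ℝ≥0) : ℝ≥0∞) volume = ENNReal.ofReal (P ^ ((3:ℝ)/10)) := by
    rw [eLp_ofReal hφc hcs (q := 10/3) (by norm_num), hPdef]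
    push_cast
    norm_num [Real.norm_eq_abs]
  have he2 : eLpNorm (fderiv ℝ φ) ((2 : ℝ≥0) : ℝ≥0∞) volume
      = ENNReal.ofReal (Q ^ ((1:ℝ)/2)) := by
    rw [eLp_ofReal hfdc (hcs.fderiv ℝ) (q := 2) (by norm_num), hQdef]
    push_cast
    norm_num
  have hsobR : P ^ ((3:ℝ)/10) ≤ Cs * Q ^ ((1:ℝ)/2) := by
    rw [he1, he2] at hsob0
    rw [← ENNReal.ofReal_coe_nnreal, ← ENNReal.ofReal_mul (by positivity)] at hsob0
    have h3 := (ENNReal.ofReal_le_ofReal_iff (by positivity)).1 hsob0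
    refine le_trans h3 ?_
    refine mul_le_mul_of_nonneg_right ?_ (Real.rpow_nonneg hQ0 _)
    rw [hCsdef]
    linarith
  have hPQ : P ^ ((1:ℝ)/2) ≤ Cs ^ ((5:ℝ)/3) * Q ^ ((5:ℝ)/6) := by
    have h1 : P ^ ((1:ℝ)/2) = (P ^ ((3:ℝ)/10)) ^ ((5:ℝ)/3) := by
      rw [← Real.rpow_mul hP0]
      norm_num
    rw [h1]
    calc (P ^ ((3:ℝ)/10)) ^ ((5:ℝ)/3)
        ≤ (Cs * Q ^ ((1:ℝ)/2)) ^ ((5:ℝ)/3) :=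
          Real.rpow_le_rpow (Real.rpow_nonneg hP0 _) hsobR (by norm_num)
      _ = Cs ^ ((5:ℝ)/3) * Q ^ ((5:ℝ)/6) := by
          rw [Real.mul_rpow hCs.le (Real.rpow_nonneg hQ0 _), ← Real.rpow_mul hQ0]
          norm_num
  have hJQ : J ≤ Cs ^ ((5:ℝ)/3) * Q ^ ((4:ℝ)/3) := by
    calc J ≤ P ^ ((1:ℝ)/2) * Q ^ ((1:ℝ)/2) := hholder
      _ ≤ Cs ^ ((5:ℝ)/3) * Q ^ ((5:ℝ)/6) * Q ^ ((1:ℝ)/2) :=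
          mul_le_mul_of_nonneg_right hPQ (Real.rpow_nonneg hQ0 _)
      _ = Cs ^ ((5:ℝ)/3) * Q ^ ((4:ℝ)/3) := by
          rw [mul_assoc, ← Real.rpow_add' hQ0 (by norm_num)]
          norm_num
  -- Q equals the gradient integral over the ball
  have hQG : Q = ∫ y in Metric.ball (0:E5) R, gradsq5 φ y := by
    have h1 : Q = ∫ y : E5, gradsq5 φ y := by
      rw [hQdef]
      exact integral_congr_ae (Filter.Eventually.of_forall fun y => gradsq_eq φ y)
    rw [h1]
    have h2 : ∀ y : E5, y ∉ Metric.closedBall (0:E5) R → gradsq5 φ y = 0 := by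
      intro y hy
      rw [Metric.mem_closedBall, dist_zero_right, not_le] at hy
      unfold gradsq5
      simp [hfd0 y hy]
    rw [← setIntegral_eq_integral_of_forall_compl_eq_zero h2]
    refine (setIntegral_congr_set ?_).symm
    rw [MeasureTheory.ae_eq_set]
    constructor
    · simp [Set.diff_eq_empty.2 Metric.ball_subset_closedBall]
    · rw [Metric.closedBall_diff_ball]
      exact Measure.addHaar_sphere volume 0 R
  -- final assembly
  set G : ℝ := ∫ y in Metric.ball (0:E5) R, gradsq5 φ y with hGdef
  have hfinal : c⁻¹ * ∫ z, g z
      ≤ (c⁻¹ * (8/3) * κ⁻¹ * Cs ^ ((5:ℝ)/3)) / r₀ ^ 3 * G ^ ((4:ℝ)/3) := by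
    have h1 : ∫ z, g z ≤ (8/3) * r₀⁻¹ ^ 3 * κ⁻¹ * (Cs ^ ((5:ℝ)/3) * Q ^ ((4:ℝ)/3)) :=
      le_trans hgJ (mul_le_mul_of_nonneg_left hJQ (by positivity))
    have h2 : c⁻¹ * ∫ z, g z
        ≤ c⁻¹ * ((8/3) * r₀⁻¹ ^ 3 * κ⁻¹ * (Cs ^ ((5:ℝ)/3) * Q ^ ((4:ℝ)/3))) :=
      mul_le_mul_of_nonneg_left h1 (by positivity)
    refine le_trans h2 (le_of_eq ?_)
    rw [← hQG]  -- G = Q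
    field_simp
  refine le_trans hmarkov ?_
  exact ENNReal.ofReal_le_ofReal hfinal

end
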